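/- Every tree-sibling time-consistent phylogenetic network with at least one reticulation has either a cherry or a reticulated cherry. -/

import Mathlib

/-- A finite directed graph on natural-number vertices, with no parallel arcs
(arcs form a `Finset` of ordered pairs). -/
structure Digraph' where
  V : Finset ℕ
  A : Finset (ℕ × ℕ)
  mem_V : ∀ e ∈ A, e.1 ∈ V ∧ e.2 ∈ V

namespace Digraph'

def inDeg (N : Digraph') (v : ℕ) : ℕ := (N.A.filter (fun e => e.2 = v)).card

def outDeg (N : Digraph') (v : ℕ) : ℕ := (N.A.filter (fun e => e.1 = v)).card

/-- Reachability by a directed path (including paths of length 0). -/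
def Reach (N : Digraph') : ℕ → ℕ → Prop :=
  Relation.ReflTransGen (fun u v => (u, v) ∈ N.A)

def Acyclic (N : Digraph') : Prop := ∀ u v, (u, v) ∈ N.A → ¬ N.Reach v u

def IsLeaf (N : Digraph') (v : ℕ) : Prop := v ∈ N.V ∧ N.outDeg v = 0

def IsTreeVertex (N : Digraph') (v : ℕ) : Prop :=
  v ∈ N.V ∧ N.inDeg v = 1 ∧ N.outDeg v = 2

def IsRet (N : Digraph') (v : ℕ) : Prop :=
  v ∈ N.V ∧ N.inDeg v = 2 ∧ N.outDeg v = 1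

/-- `N` is a (binary) phylogenetic network on leaf set `X`. -/
structure IsPhylo (N : Digraph') (X : Finset ℕ) : Prop where
  acyclic : N.Acyclic
  X_sub : X ⊆ N.V
  leafSet : ∀ v ∈ N.V, (N.outDeg v = 0 ↔ v ∈ X)
  root : ∃ ρ ∈ N.V, N.inDeg ρ = 0 ∧ N.outDeg ρ = 2 ∧ ∀ v ∈ N.V, N.Reach ρ v
  degrees : ∀ v ∈ N.V,
    (N.inDeg v = 0 ∧ N.outDeg v = 2) ∨ (N.inDeg v = 1 ∧ N.outDeg v = 0) ∨
    (N.inDeg v = 1 ∧ N.outDeg v = 2) ∨ (N.inDeg v = 2 ∧ N.outDeg v = 1)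

/-- The degenerate single-vertex network. -/
def IsSingle (N : Digraph') : Prop := ∃ x, N.V = {x} ∧ N.A = ∅

/-- `{a, b}` is a cherry: two distinct leaves with a common parent. -/
def IsCherry (N : Digraph') (a b : ℕ) : Prop :=
  a ≠ b ∧ N.IsLeaf a ∧ N.IsLeaf b ∧ ∃ p, (p, a) ∈ N.A ∧ (p, b) ∈ N.A

/-- `{a, b}` is a reticulated cherry with `b` the reticulation leaf. -/
def IsRetCherry (N : Digraph') (a b : ℕ) : Prop :=
  a ≠ b ∧ N.IsLeaf a ∧ N.IsLeaf b ∧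
  ∃ pa pb, (pa, a) ∈ N.A ∧ (pb, b) ∈ N.A ∧ N.inDeg pb = 2 ∧ (pa, pb) ∈ N.A

/-- `N'` is obtained from `N` by reducing the leaf `b` of the cherry `{a, b}`:
delete `b` and suppress the resulting in-degree-1 out-degree-1 vertex
(if the common parent is the root, delete `b` and the root, leaving the single
vertex `a`). -/
def ReduceCherry (N N' : Digraph') (a b : ℕ) : Prop :=
  N.IsCherry a b ∧ ∃ p, (p, a) ∈ N.A ∧ (p, b) ∈ N.A ∧
    ((N.inDeg p = 0 ∧ N'.V = {a} ∧ N'.A = ∅) ∨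
     (∃ u, (u, p) ∈ N.A ∧ N'.V = (N.V.erase b).erase p ∧
        N'.A = insert (u, a) (((N.A.erase (u, p)).erase (p, a)).erase (p, b))))

/-- `N'` is obtained from `N` by cutting the reticulated cherry `{a, b}` with `b`
the reticulation leaf: delete the reticulation arc from the parent of `a` to the
parent of `b`, and suppress the two resulting in-degree-1 out-degree-1 vertices. -/
def CutRetCherry (N N' : Digraph') (a b : ℕ) : Prop :=
  N.IsRetCherry a b ∧ ∃ pa pb ua q,
    (pa, a) ∈ N.A ∧ (pb, b) ∈ N.A ∧ N.inDeg pb = 2 ∧ (pa, pb) ∈ N.A ∧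
    (ua, pa) ∈ N.A ∧ (q, pb) ∈ N.A ∧ q ≠ pa ∧
    N'.V = (N.V.erase pa).erase pb ∧
    N'.A = insert (ua, a) (insert (q, b)
      (((((N.A.erase (pa, pb)).erase (ua, pa)).erase (pa, a)).erase (q, pb)).erase (pb, b)))

/-- A single cherry reduction. -/
def CherryStep (N N' : Digraph') : Prop :=
  ∃ a b, ReduceCherry N N' a b ∨ CutRetCherry N N' a b

/-- `N` is an orchard network: some sequence of cherry reductions reduces it to a
single vertex. -/
def IsOrchard (N : Digraph') : Prop :=
  ∃ N', Relation.ReflTransGen CherryStep N N' ∧ IsSingle N'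

/-- The ancestral set `γ(x)`: the non-leaf vertices from which `x` is reachable. -/
def gamma (N : Digraph') (x : ℕ) : Set ℕ :=
  {v | v ∈ N.V ∧ N.outDeg v ≠ 0 ∧ N.Reach v x}

/-- The number of directed paths in `N` from `u` to `x` (a path is recorded as the
list of its vertices; the single-vertex path counts when `u = x`). -/
noncomputable def numPaths (N : Digraph') (u x : ℕ) : ℕ :=
  Set.ncard {l : List ℕ | l.head? = some u ∧ l.getLast? = some x ∧
    l.Chain' (fun p q => (p, q) ∈ N.A)}

/-- Tree-sibling: every reticulation has a parent that is also the parent of a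
tree vertex or a leaf. -/
def TreeSibling (N : Digraph') : Prop :=
  ∀ v ∈ N.V, N.inDeg v = 2 → ∃ p w, (p, v) ∈ N.A ∧ (p, w) ∈ N.A ∧ w ≠ v ∧
    (N.IsTreeVertex w ∨ N.IsLeaf w)

/-- Time-consistent: there is a temporal labelling of the vertices. -/
def TimeConsistent (N : Digraph') : Prop :=
  ∃ t : ℕ → ℕ, ∀ u v, (u, v) ∈ N.A →
    (N.inDeg v = 2 → t u = t v) ∧ (N.inDeg v ≠ 2 → t u < t v)

/-- Tree-child: every non-leaf vertex has a child that is a tree vertex or a leaf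
(equivalently, a child of in-degree one). -/
def TreeChild (N : Digraph') : Prop :=
  ∀ v ∈ N.V, N.outDeg v ≠ 0 → ∃ w, (v, w) ∈ N.A ∧ N.inDeg w = 1

end Digraph'

open Digraph'

/-- every tree-sibling time-consistent phylogenetic network with at
least one reticulation has a cherry or a reticulated cherry. -/
lemma aux_exists_child {N : Digraph'} {v : ℕ} (hv : N.outDeg v ≠ 0) :
    ∃ c, (v, c) ∈ N.A := by
  have hne : (N.A.filter (fun e => e.1 = v)).Nonempty := by
    rw [← Finset.card_pos]
    unfold Digraph'.outDeg at hv
    omega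
  obtain ⟨e, he⟩ := hne
  obtain ⟨heA, he1⟩ := Finset.mem_filter.mp he
  obtain ⟨a, b⟩ := e
  simp only at he1
  subst he1
  exact ⟨b, heA⟩

lemma aux_two_children {N : Digraph'} {v : ℕ} (hv : N.outDeg v = 2) :
    ∃ x y, x ≠ y ∧ (v, x) ∈ N.A ∧ (v, y) ∈ N.A := by
  obtain ⟨e1, e2, hne, hs⟩ := Finset.card_eq_two.mp hv
  have h1 : e1 ∈ N.A.filter (fun e => e.1 = v) := by rw [hs]; simp
  have h2 : e2 ∈ N.A.filter (fun e => e.1 = v) := by rw [hs]; simp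
  obtain ⟨h1A, h11⟩ := Finset.mem_filter.mp h1
  obtain ⟨h2A, h21⟩ := Finset.mem_filter.mp h2
  obtain ⟨a, b⟩ := e1
  obtain ⟨c, d⟩ := e2
  simp only at h11 h21
  subst h11; subst h21
  refine ⟨b, d, ?_, h1A, h2A⟩
  intro hbd
  exact hne (by rw [hbd])

lemma aux_two_le_inDeg {N : Digraph'} {p q c : ℕ} (hp : (p, c) ∈ N.A)
    (hq : (q, c) ∈ N.A) (hne : p ≠ q) : 2 ≤ N.inDeg c := by
  have hsub : ({(p, c), (q, c)} : Finset (ℕ × ℕ)) ⊆ N.A.filter (fun e => e.2 = c) := by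
    intro e he
    rcases Finset.mem_insert.mp he with h | h
    · subst h; exact Finset.mem_filter.mpr ⟨hp, rfl⟩
    · rw [Finset.mem_singleton] at h; subst h; exact Finset.mem_filter.mpr ⟨hq, rfl⟩
  have hcard : ({(p, c), (q, c)} : Finset (ℕ × ℕ)).card = 2 :=
    Finset.card_pair (by simp [hne])
  have := Finset.card_le_card hsub
  unfold Digraph'.inDeg
  omega

lemma aux_leaf_inDeg {N : Digraph'} {X : Finset ℕ} (h : N.IsPhylo X) {w : ℕ}
    (hw : N.IsLeaf w) : N.inDeg w = 1 := by
  obtain ⟨hwV, hwo⟩ := hw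
  rcases h.degrees w hwV with h1 | h1 | h1 | h1 <;> omega

theorem stmt_6 (N : Digraph') (X : Finset ℕ)
    (h : N.IsPhylo X) (hts : N.TreeSibling) (htc : N.TimeConsistent)
    (hret : ∃ v ∈ N.V, N.inDeg v = 2) :
    (∃ a b, N.IsCherry a b) ∨ (∃ a b, N.IsRetCherry a b) := by
  classical
  obtain ⟨t, ht⟩ := htc
  obtain ⟨r0, hr0V, hr0d⟩ := hret
  obtain ⟨rm, hrmR, hrmMax⟩ := (N.V.filter (fun v => N.inDeg v = 2)).exists_max_image t
      ⟨r0, Finset.mem_filter.mpr ⟨hr0V, hr0d⟩⟩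
  set m := t rm with hm
  have hmax : ∀ v ∈ N.V, N.inDeg v = 2 → t v ≤ m := fun v hv hd =>
    hrmMax v (Finset.mem_filter.mpr ⟨hv, hd⟩)
  by_cases hA : ∃ v ∈ N.V, N.outDeg v ≠ 0 ∧ m < t v
  · left
    obtain ⟨v1, hv1V, hv1o, hv1t⟩ := hA
    obtain ⟨v, hvF, hvMax⟩ :=
      (N.V.filter fun v => N.outDeg v ≠ 0 ∧ m < t v).exists_max_image t
        ⟨v1, Finset.mem_filter.mpr ⟨hv1V, hv1o, hv1t⟩⟩
    obtain ⟨hvV, hvo, hvt⟩ := Finset.mem_filter.mp hvF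
    have hvd2 : N.outDeg v = 2 := by
      rcases h.degrees v hvV with h1 | h1 | h1 | h1
      · exact h1.2
      · exact absurd h1.2 hvo
      · exact h1.2
      · have := hmax v hvV h1.1
        omega
    obtain ⟨x, y, hxy, hx, hy⟩ := aux_two_children hvd2
    have leaf : ∀ z, (v, z) ∈ N.A → N.IsLeaf z := by
      intro z hz
      have hzV : z ∈ N.V := (N.mem_V _ hz).2
      have hzid : N.inDeg z ≠ 2 := by
        intro h2
        have h3 := (ht v z hz).1 h2
        have h4 := hmax z hzV h2
        omega
      have htz : t v < t z := (ht v z hz).2 hzid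
      refine ⟨hzV, ?_⟩
      by_contra hzo
      have := hvMax z (Finset.mem_filter.mpr ⟨hzV, hzo, by omega⟩)
      omega
    exact ⟨x, y, hxy, leaf x hx, leaf y hy, v, hx, hy⟩
  · right
    obtain ⟨r, hrS, hrMin⟩ :=
      (N.V.filter fun v => N.inDeg v = 2 ∧ t v = m).exists_min_image
        (fun v => (N.V.filter fun w => N.Reach v w).card)
        ⟨rm, Finset.mem_filter.mpr
          ⟨(Finset.mem_filter.mp hrmR).1, (Finset.mem_filter.mp hrmR).2, rfl⟩⟩
    obtain ⟨hrV, hrd, hrt⟩ := Finset.mem_filter.mp hrS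
    have hro : N.outDeg r = 1 := by
      rcases h.degrees r hrV with h1 | h1 | h1 | h1 <;> omega
    have hrne : N.outDeg r ≠ 0 := by rw [hro]; exact one_ne_zero
    obtain ⟨c, hc⟩ := aux_exists_child hrne
    have hcV : c ∈ N.V := (N.mem_V _ hc).2
    have hcid : N.inDeg c ≠ 2 := by
      intro h2
      have htrc : t r = t c := (ht r c hc).1 h2
      have hcS : c ∈ N.V.filter fun v => N.inDeg v = 2 ∧ t v = m :=
        Finset.mem_filter.mpr ⟨hcV, h2, by omega⟩
      have hle := hrMin c hcS
      have hsub : (N.V.filter fun w => N.Reach c w) ⊂ (N.V.filter fun w => N.Reach r w) := by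
        constructor
        · intro w hw
          obtain ⟨hwV, hwR⟩ := Finset.mem_filter.mp hw
          exact Finset.mem_filter.mpr ⟨hwV, Relation.ReflTransGen.head hc hwR⟩
        · intro hcon
          have hrr : r ∈ N.V.filter fun w => N.Reach r w :=
            Finset.mem_filter.mpr ⟨hrV, Relation.ReflTransGen.refl⟩
          exact h.acyclic r c hc (Finset.mem_filter.mp (hcon hrr)).2
      have := Finset.card_lt_card hsub
      omega
    have hct : m < t c := by
      have := (ht r c hc).2 hcid
      omega
    have hcleaf : N.IsLeaf c := by
      refine ⟨hcV, ?_⟩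
      by_contra ho
      exact hA ⟨c, hcV, ho, hct⟩
    obtain ⟨p, w, hpr, hpw, hwr, hwkind⟩ := hts r hrV hrd
    have hwV : w ∈ N.V := (N.mem_V _ hpw).2
    have htp : t p = t r := (ht p r hpr).1 hrd
    have hwleaf : N.IsLeaf w := by
      rcases hwkind with hw | hw
      · exfalso
        obtain ⟨_, hwi, hwo⟩ := hw
        have : t p < t w := (ht p w hpw).2 (by omega)
        exact hA ⟨w, hwV, by omega, by omega⟩
      · exact hw
    have hwc : w ≠ c := by
      intro he
      subst he
      have hpne : p ≠ r := by
        intro he2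
        subst he2
        exact h.acyclic p p hpr Relation.ReflTransGen.refl
      have h2 := aux_two_le_inDeg hpw hc hpne
      have h1 := aux_leaf_inDeg h hwleaf
      omega
    exact ⟨w, c, hwc, hwleaf, hcleaf, p, r, hpw, hc, hrd, hpr⟩
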